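/- (Proposition 1) Let 0 < η < 1 and consider the objective l(θ, ψ, φ) = ψ − ψ·θ + (1/2)(1 + φ)² + (1/2)(θ + φ)² (the Stein Bridging toy objective with λ₁ = λ₂ = 1), optimized by alternate SGD: ψ_{t+1} = ψ_t + η(1 − θ_t), φ_{t+1} = φ_t − η(1 + θ_t + 2φ_t), θ_{t+1} = θ_t − η(−ψ_{t+1} + θ_t + φ_{t+1}). Then the squared norm N_t = ψ_t² + (θ_t − 1)² + (φ_t + 1)² decreases geometrically: there exists a constant C ≥ 0 (depending on η and the initialization) such that N_t ≤ C·((1 − η + η²)(1 + η − η²))^t = C·(1 − η²(1−η)²)^t for all t; in particular (ψ_t, θ_t, φ_t) converges to the optimum (0, 1, −1). -/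

import Mathlib

noncomputable section

def sbp11 (e : ℝ) : ℝ :=
  (152 : ℝ) + (-516 : ℝ) * e + (864 : ℝ) * e ^ 2 + (-865 : ℝ) * e ^ 3 + (632 : ℝ) * e ^ 4 + (-768 : ℝ) * e ^ 5 + (1502 : ℝ) * e ^ 6 + (-2216 : ℝ) * e ^ 7 + (2266 : ℝ) * e ^ 8 + (-1675 : ℝ) * e ^ 9 + (936 : ℝ) * e ^ 10 + (-444 : ℝ) * e ^ 11 + (192 : ℝ) * e ^ 12 + (-63 : ℝ) * e ^ 13 + (12 : ℝ) * e ^ 14 + (-1 : ℝ) * e ^ 15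

def sbp12 (e : ℝ) : ℝ :=
  (-32 : ℝ) + (52 : ℝ) * e + (-2 : ℝ) * e ^ 2 + (-79 : ℝ) * e ^ 3 + (58 : ℝ) * e ^ 4 + (105 : ℝ) * e ^ 5 + (-272 : ℝ) * e ^ 6 + (255 : ℝ) * e ^ 7 + (-88 : ℝ) * e ^ 8 + (-50 : ℝ) * e ^ 9 + (72 : ℝ) * e ^ 10 + (-34 : ℝ) * e ^ 11 + (8 : ℝ) * e ^ 12 + (-1 : ℝ) * e ^ 13

def sbp13 (e : ℝ) : ℝ :=
  (-8 : ℝ) + (48 : ℝ) * e + (-106 : ℝ) * e ^ 2 + (81 : ℝ) * e ^ 3 + (68 : ℝ) * e ^ 4 + (-185 : ℝ) * e ^ 5 + (152 : ℝ) * e ^ 6 + (-107 : ℝ) * e ^ 7 + (198 : ℝ) * e ^ 8 + (-338 : ℝ) * e ^ 9 + (356 : ℝ) * e ^ 10 + (-234 : ℝ) * e ^ 11 + (94 : ℝ) * e ^ 12 + (-21 : ℝ) * e ^ 13 + (2 : ℝ) * e ^ 14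

def sbp22 (e : ℝ) : ℝ :=
  (112 : ℝ) + (-352 : ℝ) * e + (576 : ℝ) * e ^ 2 + (-637 : ℝ) * e ^ 3 + (670 : ℝ) * e ^ 4 + (-902 : ℝ) * e ^ 5 + (1302 : ℝ) * e ^ 6 + (-1540 : ℝ) * e ^ 7 + (1436 : ℝ) * e ^ 8 + (-1097 : ℝ) * e ^ 9 + (734 : ℝ) * e ^ 10 + (-438 : ℝ) * e ^ 11 + (206 : ℝ) * e ^ 12 + (-65 : ℝ) * e ^ 13 + (12 : ℝ) * e ^ 14 + (-1 : ℝ) * e ^ 15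

def sbp23 (e : ℝ) : ℝ :=
  (-48 : ℝ) + (236 : ℝ) * e + (-486 : ℝ) * e ^ 2 + (605 : ℝ) * e ^ 3 + (-568 : ℝ) * e ^ 4 + (627 : ℝ) * e ^ 5 + (-926 : ℝ) * e ^ 6 + (1249 : ℝ) * e ^ 7 + (-1252 : ℝ) * e ^ 8 + (898 : ℝ) * e ^ 9 + (-448 : ℝ) * e ^ 10 + (156 : ℝ) * e ^ 11 + (-46 : ℝ) * e ^ 12 + (13 : ℝ) * e ^ 13 + (-2 : ℝ) * e ^ 14

def sbp33 (e : ℝ) : ℝ :=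
  (40 : ℝ) + (-228 : ℝ) * e + (600 : ℝ) * e ^ 2 + (-881 : ℝ) * e ^ 3 + (828 : ℝ) * e ^ 4 + (-680 : ℝ) * e ^ 5 + (922 : ℝ) * e ^ 6 + (-1504 : ℝ) * e ^ 7 + (1802 : ℝ) * e ^ 8 + (-1399 : ℝ) * e ^ 9 + (592 : ℝ) * e ^ 10 + (32 : ℝ) * e ^ 11 + (-212 : ℝ) * e ^ 12 + (125 : ℝ) * e ^ 13 + (-32 : ℝ) * e ^ 14 + (3 : ℝ) * e ^ 15

def sbDpos (e : ℝ) : ℝ :=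
  (64 : ℝ) + (-304 : ℝ) * e + (872 : ℝ) * e ^ 2 + (-1594 : ℝ) * e ^ 3 + (2036 : ℝ) * e ^ 4 + (-2070 : ℝ) * e ^ 5 + (2273 : ℝ) * e ^ 6 + (-3209 : ℝ) * e ^ 7 + (4495 : ℝ) * e ^ 8 + (-5041 : ℝ) * e ^ 9 + (4335 : ℝ) * e ^ 10 + (-2883 : ℝ) * e ^ 11 + (1530 : ℝ) * e ^ 12 + (-690 : ℝ) * e ^ 13 + (266 : ℝ) * e ^ 14 + (-76 : ℝ) * e ^ 15 + (13 : ℝ) * e ^ 16 + (-1 : ℝ) * e ^ 17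

def sbQ (e u v w : ℝ) : ℝ :=
  sbp11 e * u ^ 2 + sbp22 e * v ^ 2 + sbp33 e * w ^ 2 +
    2 * sbp12 e * u * v + 2 * sbp13 e * u * w + 2 * sbp23 e * v * w

def sbM2 (e : ℝ) : ℝ := sbp11 e * sbp22 e - sbp12 e ^ 2

def sbDet (e : ℝ) : ℝ :=
  sbp11 e * (sbp22 e * sbp33 e - sbp23 e ^ 2) - sbp12 e * (sbp12 e * sbp33 e - sbp23 e * sbp13 e)
    + sbp13 e * (sbp12 e * sbp23 e - sbp22 e * sbp13 e)

lemma sbp11_pos {e : ℝ} (h0 : 0 < e) (h1 : e < 1) : 0 < sbp11 e := by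
  obtain ⟨b, hb, hbe⟩ : ∃ b, 0 < b ∧ b = 1 - e := ⟨1 - e, by linarith, rfl⟩
  have key : sbp11 e =
      (152 : ℝ) * e ^ 0 * b ^ 15 +
      (1764 : ℝ) * e ^ 1 * b ^ 14 +
      (9600 : ℝ) * e ^ 2 * b ^ 13 +
      (32571 : ℝ) * e ^ 3 * b ^ 12 +
      (77300 : ℝ) * e ^ 4 * b ^ 11 +
      (136138 : ℝ) * e ^ 5 * b ^ 10 +
      (183770 : ℝ) * e ^ 6 * b ^ 9 +
      (193387 : ℝ) * e ^ 7 * b ^ 8 +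
      (159762 : ℝ) * e ^ 8 * b ^ 7 +
      (103587 : ℝ) * e ^ 9 * b ^ 6 +
      (52388 : ℝ) * e ^ 10 * b ^ 5 +
      (20382 : ℝ) * e ^ 11 * b ^ 4 +
      (5918 : ℝ) * e ^ 12 * b ^ 3 +
      (1200 : ℝ) * e ^ 13 * b ^ 2 +
      (148 : ℝ) * e ^ 14 * b ^ 1 +
      (8 : ℝ) * e ^ 15 * b ^ 0 := by
    rw [hbe]; unfold sbp11; ring
  have t0 : (0:ℝ) < (152 : ℝ) * e ^ 0 * b ^ 15 :=
    mul_pos (mul_pos (by norm_num) (pow_pos h0 0)) (pow_pos hb 15)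
  have t1 : (0:ℝ) ≤ (1764 : ℝ) * e ^ 1 * b ^ 14 :=
    mul_nonneg (mul_nonneg (by norm_num) (pow_nonneg h0.le 1)) (pow_nonneg hb.le 14)
  have t2 : (0:ℝ) ≤ (9600 : ℝ) * e ^ 2 * b ^ 13 :=
    mul_nonneg (mul_nonneg (by norm_num) (pow_nonneg h0.le 2)) (pow_nonneg hb.le 13)
  have t3 : (0:ℝ) ≤ (32571 : ℝ) * e ^ 3 * b ^ 12 :=
    mul_nonneg (mul_nonneg (by norm_num) (pow_nonneg h0.le 3)) (pow_nonneg hb.le 12)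
  have t4 : (0:ℝ) ≤ (77300 : ℝ) * e ^ 4 * b ^ 11 :=
    mul_nonneg (mul_nonneg (by norm_num) (pow_nonneg h0.le 4)) (pow_nonneg hb.le 11)
  have t5 : (0:ℝ) ≤ (136138 : ℝ) * e ^ 5 * b ^ 10 :=
    mul_nonneg (mul_nonneg (by norm_num) (pow_nonneg h0.le 5)) (pow_nonneg hb.le 10)
  have t6 : (0:ℝ) ≤ (183770 : ℝ) * e ^ 6 * b ^ 9 :=
    mul_nonneg (mul_nonneg (by norm_num) (pow_nonneg h0.le 6)) (pow_nonneg hb.le 9)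
  have t7 : (0:ℝ) ≤ (193387 : ℝ) * e ^ 7 * b ^ 8 :=
    mul_nonneg (mul_nonneg (by norm_num) (pow_nonneg h0.le 7)) (pow_nonneg hb.le 8)
  have t8 : (0:ℝ) ≤ (159762 : ℝ) * e ^ 8 * b ^ 7 :=
    mul_nonneg (mul_nonneg (by norm_num) (pow_nonneg h0.le 8)) (pow_nonneg hb.le 7)
  have t9 : (0:ℝ) ≤ (103587 : ℝ) * e ^ 9 * b ^ 6 :=
    mul_nonneg (mul_nonneg (by norm_num) (pow_nonneg h0.le 9)) (pow_nonneg hb.le 6)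
  have t10 : (0:ℝ) ≤ (52388 : ℝ) * e ^ 10 * b ^ 5 :=
    mul_nonneg (mul_nonneg (by norm_num) (pow_nonneg h0.le 10)) (pow_nonneg hb.le 5)
  have t11 : (0:ℝ) ≤ (20382 : ℝ) * e ^ 11 * b ^ 4 :=
    mul_nonneg (mul_nonneg (by norm_num) (pow_nonneg h0.le 11)) (pow_nonneg hb.le 4)
  have t12 : (0:ℝ) ≤ (5918 : ℝ) * e ^ 12 * b ^ 3 :=
    mul_nonneg (mul_nonneg (by norm_num) (pow_nonneg h0.le 12)) (pow_nonneg hb.le 3)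
  have t13 : (0:ℝ) ≤ (1200 : ℝ) * e ^ 13 * b ^ 2 :=
    mul_nonneg (mul_nonneg (by norm_num) (pow_nonneg h0.le 13)) (pow_nonneg hb.le 2)
  have t14 : (0:ℝ) ≤ (148 : ℝ) * e ^ 14 * b ^ 1 :=
    mul_nonneg (mul_nonneg (by norm_num) (pow_nonneg h0.le 14)) (pow_nonneg hb.le 1)
  have t15 : (0:ℝ) ≤ (8 : ℝ) * e ^ 15 * b ^ 0 :=
    mul_nonneg (mul_nonneg (by norm_num) (pow_nonneg h0.le 15)) (pow_nonneg hb.le 0)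
  linarith [key, t0, t1, t2, t3, t4, t5, t6, t7, t8, t9, t10, t11, t12, t13, t14, t15]

lemma sbM2_pos {e : ℝ} (h0 : 0 < e) (h1 : e < 1) : 0 < sbM2 e := by
  obtain ⟨b, hb, hbe⟩ : ∃ b, 0 < b ∧ b = 1 - e := ⟨1 - e, by linarith, rfl⟩
  have key : sbM2 e =
      (16000 : ℝ) * e ^ 0 * b ^ 30 +
      (372032 : ℝ) * e ^ 1 * b ^ 29 +
      (4192048 : ℝ) * e ^ 2 * b ^ 28 +
      (30492456 : ℝ) * e ^ 3 * b ^ 27 +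
      (160942480 : ℝ) * e ^ 4 * b ^ 26 +
      (656926100 : ℝ) * e ^ 5 * b ^ 25 +
      (2157919136 : ℝ) * e ^ 6 * b ^ 24 +
      (5860878818 : ℝ) * e ^ 7 * b ^ 23 +
      (13417309286 : ℝ) * e ^ 8 * b ^ 22 +
      (26259972982 : ℝ) * e ^ 9 * b ^ 21 +
      (44406864375 : ℝ) * e ^ 10 * b ^ 20 +
      (65402283876 : ℝ) * e ^ 11 * b ^ 19 +
      (84392969732 : ℝ) * e ^ 12 * b ^ 18 +
      (95823843456 : ℝ) * e ^ 13 * b ^ 17 +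
      (96027757726 : ℝ) * e ^ 14 * b ^ 16 +
      (85089151066 : ℝ) * e ^ 15 * b ^ 15 +
      (66718484576 : ℝ) * e ^ 16 * b ^ 14 +
      (46281962918 : ℝ) * e ^ 17 * b ^ 13 +
      (28367114703 : ℝ) * e ^ 18 * b ^ 12 +
      (15324896798 : ℝ) * e ^ 19 * b ^ 11 +
      (7269532492 : ℝ) * e ^ 20 * b ^ 10 +
      (3011274606 : ℝ) * e ^ 21 * b ^ 9 +
      (1080882443 : ℝ) * e ^ 22 * b ^ 8 +
      (332621172 : ℝ) * e ^ 23 * b ^ 7 +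
      (86461296 : ℝ) * e ^ 24 * b ^ 6 +
      (18591848 : ℝ) * e ^ 25 * b ^ 5 +
      (3208844 : ℝ) * e ^ 26 * b ^ 4 +
      (424816 : ℝ) * e ^ 27 * b ^ 3 +
      (40112 : ℝ) * e ^ 28 * b ^ 2 +
      (2368 : ℝ) * e ^ 29 * b ^ 1 +
      (64 : ℝ) * e ^ 30 * b ^ 0 := by
    rw [hbe]; unfold sbM2 sbp11 sbp22 sbp12; ring
  have t0 : (0:ℝ) < (16000 : ℝ) * e ^ 0 * b ^ 30 :=
    mul_pos (mul_pos (by norm_num) (pow_pos h0 0)) (pow_pos hb 30)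
  have t1 : (0:ℝ) ≤ (372032 : ℝ) * e ^ 1 * b ^ 29 :=
    mul_nonneg (mul_nonneg (by norm_num) (pow_nonneg h0.le 1)) (pow_nonneg hb.le 29)
  have t2 : (0:ℝ) ≤ (4192048 : ℝ) * e ^ 2 * b ^ 28 :=
    mul_nonneg (mul_nonneg (by norm_num) (pow_nonneg h0.le 2)) (pow_nonneg hb.le 28)
  have t3 : (0:ℝ) ≤ (30492456 : ℝ) * e ^ 3 * b ^ 27 :=
    mul_nonneg (mul_nonneg (by norm_num) (pow_nonneg h0.le 3)) (pow_nonneg hb.le 27)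
  have t4 : (0:ℝ) ≤ (160942480 : ℝ) * e ^ 4 * b ^ 26 :=
    mul_nonneg (mul_nonneg (by norm_num) (pow_nonneg h0.le 4)) (pow_nonneg hb.le 26)
  have t5 : (0:ℝ) ≤ (656926100 : ℝ) * e ^ 5 * b ^ 25 :=
    mul_nonneg (mul_nonneg (by norm_num) (pow_nonneg h0.le 5)) (pow_nonneg hb.le 25)
  have t6 : (0:ℝ) ≤ (2157919136 : ℝ) * e ^ 6 * b ^ 24 :=
    mul_nonneg (mul_nonneg (by norm_num) (pow_nonneg h0.le 6)) (pow_nonneg hb.le 24)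
  have t7 : (0:ℝ) ≤ (5860878818 : ℝ) * e ^ 7 * b ^ 23 :=
    mul_nonneg (mul_nonneg (by norm_num) (pow_nonneg h0.le 7)) (pow_nonneg hb.le 23)
  have t8 : (0:ℝ) ≤ (13417309286 : ℝ) * e ^ 8 * b ^ 22 :=
    mul_nonneg (mul_nonneg (by norm_num) (pow_nonneg h0.le 8)) (pow_nonneg hb.le 22)
  have t9 : (0:ℝ) ≤ (26259972982 : ℝ) * e ^ 9 * b ^ 21 :=
    mul_nonneg (mul_nonneg (by norm_num) (pow_nonneg h0.le 9)) (pow_nonneg hb.le 21)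
  have t10 : (0:ℝ) ≤ (44406864375 : ℝ) * e ^ 10 * b ^ 20 :=
    mul_nonneg (mul_nonneg (by norm_num) (pow_nonneg h0.le 10)) (pow_nonneg hb.le 20)
  have t11 : (0:ℝ) ≤ (65402283876 : ℝ) * e ^ 11 * b ^ 19 :=
    mul_nonneg (mul_nonneg (by norm_num) (pow_nonneg h0.le 11)) (pow_nonneg hb.le 19)
  have t12 : (0:ℝ) ≤ (84392969732 : ℝ) * e ^ 12 * b ^ 18 :=
    mul_nonneg (mul_nonneg (by norm_num) (pow_nonneg h0.le 12)) (pow_nonneg hb.le 18)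
  have t13 : (0:ℝ) ≤ (95823843456 : ℝ) * e ^ 13 * b ^ 17 :=
    mul_nonneg (mul_nonneg (by norm_num) (pow_nonneg h0.le 13)) (pow_nonneg hb.le 17)
  have t14 : (0:ℝ) ≤ (96027757726 : ℝ) * e ^ 14 * b ^ 16 :=
    mul_nonneg (mul_nonneg (by norm_num) (pow_nonneg h0.le 14)) (pow_nonneg hb.le 16)
  have t15 : (0:ℝ) ≤ (85089151066 : ℝ) * e ^ 15 * b ^ 15 :=
    mul_nonneg (mul_nonneg (by norm_num) (pow_nonneg h0.le 15)) (pow_nonneg hb.le 15)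
  have t16 : (0:ℝ) ≤ (66718484576 : ℝ) * e ^ 16 * b ^ 14 :=
    mul_nonneg (mul_nonneg (by norm_num) (pow_nonneg h0.le 16)) (pow_nonneg hb.le 14)
  have t17 : (0:ℝ) ≤ (46281962918 : ℝ) * e ^ 17 * b ^ 13 :=
    mul_nonneg (mul_nonneg (by norm_num) (pow_nonneg h0.le 17)) (pow_nonneg hb.le 13)
  have t18 : (0:ℝ) ≤ (28367114703 : ℝ) * e ^ 18 * b ^ 12 :=
    mul_nonneg (mul_nonneg (by norm_num) (pow_nonneg h0.le 18)) (pow_nonneg hb.le 12)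
  have t19 : (0:ℝ) ≤ (15324896798 : ℝ) * e ^ 19 * b ^ 11 :=
    mul_nonneg (mul_nonneg (by norm_num) (pow_nonneg h0.le 19)) (pow_nonneg hb.le 11)
  have t20 : (0:ℝ) ≤ (7269532492 : ℝ) * e ^ 20 * b ^ 10 :=
    mul_nonneg (mul_nonneg (by norm_num) (pow_nonneg h0.le 20)) (pow_nonneg hb.le 10)
  have t21 : (0:ℝ) ≤ (3011274606 : ℝ) * e ^ 21 * b ^ 9 :=
    mul_nonneg (mul_nonneg (by norm_num) (pow_nonneg h0.le 21)) (pow_nonneg hb.le 9)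
  have t22 : (0:ℝ) ≤ (1080882443 : ℝ) * e ^ 22 * b ^ 8 :=
    mul_nonneg (mul_nonneg (by norm_num) (pow_nonneg h0.le 22)) (pow_nonneg hb.le 8)
  have t23 : (0:ℝ) ≤ (332621172 : ℝ) * e ^ 23 * b ^ 7 :=
    mul_nonneg (mul_nonneg (by norm_num) (pow_nonneg h0.le 23)) (pow_nonneg hb.le 7)
  have t24 : (0:ℝ) ≤ (86461296 : ℝ) * e ^ 24 * b ^ 6 :=
    mul_nonneg (mul_nonneg (by norm_num) (pow_nonneg h0.le 24)) (pow_nonneg hb.le 6)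
  have t25 : (0:ℝ) ≤ (18591848 : ℝ) * e ^ 25 * b ^ 5 :=
    mul_nonneg (mul_nonneg (by norm_num) (pow_nonneg h0.le 25)) (pow_nonneg hb.le 5)
  have t26 : (0:ℝ) ≤ (3208844 : ℝ) * e ^ 26 * b ^ 4 :=
    mul_nonneg (mul_nonneg (by norm_num) (pow_nonneg h0.le 26)) (pow_nonneg hb.le 4)
  have t27 : (0:ℝ) ≤ (424816 : ℝ) * e ^ 27 * b ^ 3 :=
    mul_nonneg (mul_nonneg (by norm_num) (pow_nonneg h0.le 27)) (pow_nonneg hb.le 3)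
  have t28 : (0:ℝ) ≤ (40112 : ℝ) * e ^ 28 * b ^ 2 :=
    mul_nonneg (mul_nonneg (by norm_num) (pow_nonneg h0.le 28)) (pow_nonneg hb.le 2)
  have t29 : (0:ℝ) ≤ (2368 : ℝ) * e ^ 29 * b ^ 1 :=
    mul_nonneg (mul_nonneg (by norm_num) (pow_nonneg h0.le 29)) (pow_nonneg hb.le 1)
  have t30 : (0:ℝ) ≤ (64 : ℝ) * e ^ 30 * b ^ 0 :=
    mul_nonneg (mul_nonneg (by norm_num) (pow_nonneg h0.le 30)) (pow_nonneg hb.le 0)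
  linarith [key, t0, t1, t2, t3, t4, t5, t6, t7, t8, t9, t10, t11, t12, t13, t14, t15, t16, t17, t18, t19, t20, t21, t22, t23, t24, t25, t26, t27, t28, t29, t30]

set_option maxHeartbeats 1000000 in
lemma sbDet_pos {e : ℝ} (h0 : 0 < e) (h1 : e < 1) : 0 ≤ sbDet e := by
  obtain ⟨b, hb, hbe⟩ : ∃ b, 0 < b ∧ b = 1 - e := ⟨1 - e, by linarith, rfl⟩
  have key : sbDet e =
      (258048 : ℝ) * e ^ 0 * b ^ 45 +
      (8694784 : ℝ) * e ^ 1 * b ^ 44 +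
      (144113664 : ℝ) * e ^ 2 * b ^ 43 +
      (1566632448 : ℝ) * e ^ 3 * b ^ 42 +
      (12564944320 : ℝ) * e ^ 4 * b ^ 41 +
      (79292889200 : ℝ) * e ^ 5 * b ^ 40 +
      (409998321488 : ℝ) * e ^ 6 * b ^ 39 +
      (1785842747940 : ℝ) * e ^ 7 * b ^ 38 +
      (6685222119016 : ℝ) * e ^ 8 * b ^ 37 +
      (21833538633744 : ℝ) * e ^ 9 * b ^ 36 +
      (62935288793852 : ℝ) * e ^ 10 * b ^ 35 +
      (161575112495960 : ℝ) * e ^ 11 * b ^ 34 +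
      (372143958258460 : ℝ) * e ^ 12 * b ^ 33 +
      (773456963383213 : ℝ) * e ^ 13 * b ^ 32 +
      (1457477053621838 : ℝ) * e ^ 14 * b ^ 31 +
      (2499625216974620 : ℝ) * e ^ 15 * b ^ 30 +
      (3913894780002568 : ℝ) * e ^ 16 * b ^ 29 +
      (5609148459574491 : ℝ) * e ^ 17 * b ^ 28 +
      (7372405737869536 : ℝ) * e ^ 18 * b ^ 27 +
      (8900719643550453 : ℝ) * e ^ 19 * b ^ 26 +
      (9882204794087684 : ℝ) * e ^ 20 * b ^ 25 +
      (10098357418705719 : ℝ) * e ^ 21 * b ^ 24 +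
      (9502286746533434 : ℝ) * e ^ 22 * b ^ 23 +
      (8234968640708870 : ℝ) * e ^ 23 * b ^ 22 +
      (6571949006397080 : ℝ) * e ^ 24 * b ^ 21 +
      (4827601461588288 : ℝ) * e ^ 25 * b ^ 20 +
      (3261662964994246 : ℝ) * e ^ 26 * b ^ 19 +
      (2024562534992297 : ℝ) * e ^ 27 * b ^ 18 +
      (1152801518796900 : ℝ) * e ^ 28 * b ^ 17 +
      (600988933252927 : ℝ) * e ^ 29 * b ^ 16 +
      (286157187852248 : ℝ) * e ^ 30 * b ^ 15 +
      (124064200402759 : ℝ) * e ^ 31 * b ^ 14 +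
      (48792705719708 : ℝ) * e ^ 32 * b ^ 13 +
      (17326299219156 : ℝ) * e ^ 33 * b ^ 12 +
      (5523182255232 : ℝ) * e ^ 34 * b ^ 11 +
      (1569183042088 : ℝ) * e ^ 35 * b ^ 10 +
      (393741276000 : ℝ) * e ^ 36 * b ^ 9 +
      (86249241840 : ℝ) * e ^ 37 * b ^ 8 +
      (16245426304 : ℝ) * e ^ 38 * b ^ 7 +
      (2578355184 : ℝ) * e ^ 39 * b ^ 6 +
      (335265472 : ℝ) * e ^ 40 * b ^ 5 +
      (34278976 : ℝ) * e ^ 41 * b ^ 4 +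
      (2582016 : ℝ) * e ^ 42 * b ^ 3 +
      (127232 : ℝ) * e ^ 43 * b ^ 2 +
      (3072 : ℝ) * e ^ 44 * b ^ 1 := by
    rw [hbe]; unfold sbDet sbp11 sbp12 sbp13 sbp22 sbp23 sbp33; ring
  have t0 : (0:ℝ) ≤ (258048 : ℝ) * e ^ 0 * b ^ 45 :=
    mul_nonneg (mul_nonneg (by norm_num) (pow_nonneg h0.le 0)) (pow_nonneg hb.le 45)
  have t1 : (0:ℝ) ≤ (8694784 : ℝ) * e ^ 1 * b ^ 44 :=
    mul_nonneg (mul_nonneg (by norm_num) (pow_nonneg h0.le 1)) (pow_nonneg hb.le 44)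
  have t2 : (0:ℝ) ≤ (144113664 : ℝ) * e ^ 2 * b ^ 43 :=
    mul_nonneg (mul_nonneg (by norm_num) (pow_nonneg h0.le 2)) (pow_nonneg hb.le 43)
  have t3 : (0:ℝ) ≤ (1566632448 : ℝ) * e ^ 3 * b ^ 42 :=
    mul_nonneg (mul_nonneg (by norm_num) (pow_nonneg h0.le 3)) (pow_nonneg hb.le 42)
  have t4 : (0:ℝ) ≤ (12564944320 : ℝ) * e ^ 4 * b ^ 41 :=
    mul_nonneg (mul_nonneg (by norm_num) (pow_nonneg h0.le 4)) (pow_nonneg hb.le 41)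
  have t5 : (0:ℝ) ≤ (79292889200 : ℝ) * e ^ 5 * b ^ 40 :=
    mul_nonneg (mul_nonneg (by norm_num) (pow_nonneg h0.le 5)) (pow_nonneg hb.le 40)
  have t6 : (0:ℝ) ≤ (409998321488 : ℝ) * e ^ 6 * b ^ 39 :=
    mul_nonneg (mul_nonneg (by norm_num) (pow_nonneg h0.le 6)) (pow_nonneg hb.le 39)
  have t7 : (0:ℝ) ≤ (1785842747940 : ℝ) * e ^ 7 * b ^ 38 :=
    mul_nonneg (mul_nonneg (by norm_num) (pow_nonneg h0.le 7)) (pow_nonneg hb.le 38)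
  have t8 : (0:ℝ) ≤ (6685222119016 : ℝ) * e ^ 8 * b ^ 37 :=
    mul_nonneg (mul_nonneg (by norm_num) (pow_nonneg h0.le 8)) (pow_nonneg hb.le 37)
  have t9 : (0:ℝ) ≤ (21833538633744 : ℝ) * e ^ 9 * b ^ 36 :=
    mul_nonneg (mul_nonneg (by norm_num) (pow_nonneg h0.le 9)) (pow_nonneg hb.le 36)
  have t10 : (0:ℝ) ≤ (62935288793852 : ℝ) * e ^ 10 * b ^ 35 :=
    mul_nonneg (mul_nonneg (by norm_num) (pow_nonneg h0.le 10)) (pow_nonneg hb.le 35)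
  have t11 : (0:ℝ) ≤ (161575112495960 : ℝ) * e ^ 11 * b ^ 34 :=
    mul_nonneg (mul_nonneg (by norm_num) (pow_nonneg h0.le 11)) (pow_nonneg hb.le 34)
  have t12 : (0:ℝ) ≤ (372143958258460 : ℝ) * e ^ 12 * b ^ 33 :=
    mul_nonneg (mul_nonneg (by norm_num) (pow_nonneg h0.le 12)) (pow_nonneg hb.le 33)
  have t13 : (0:ℝ) ≤ (773456963383213 : ℝ) * e ^ 13 * b ^ 32 :=
    mul_nonneg (mul_nonneg (by norm_num) (pow_nonneg h0.le 13)) (pow_nonneg hb.le 32)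
  have t14 : (0:ℝ) ≤ (1457477053621838 : ℝ) * e ^ 14 * b ^ 31 :=
    mul_nonneg (mul_nonneg (by norm_num) (pow_nonneg h0.le 14)) (pow_nonneg hb.le 31)
  have t15 : (0:ℝ) ≤ (2499625216974620 : ℝ) * e ^ 15 * b ^ 30 :=
    mul_nonneg (mul_nonneg (by norm_num) (pow_nonneg h0.le 15)) (pow_nonneg hb.le 30)
  have t16 : (0:ℝ) ≤ (3913894780002568 : ℝ) * e ^ 16 * b ^ 29 :=
    mul_nonneg (mul_nonneg (by norm_num) (pow_nonneg h0.le 16)) (pow_nonneg hb.le 29)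
  have t17 : (0:ℝ) ≤ (5609148459574491 : ℝ) * e ^ 17 * b ^ 28 :=
    mul_nonneg (mul_nonneg (by norm_num) (pow_nonneg h0.le 17)) (pow_nonneg hb.le 28)
  have t18 : (0:ℝ) ≤ (7372405737869536 : ℝ) * e ^ 18 * b ^ 27 :=
    mul_nonneg (mul_nonneg (by norm_num) (pow_nonneg h0.le 18)) (pow_nonneg hb.le 27)
  have t19 : (0:ℝ) ≤ (8900719643550453 : ℝ) * e ^ 19 * b ^ 26 :=
    mul_nonneg (mul_nonneg (by norm_num) (pow_nonneg h0.le 19)) (pow_nonneg hb.le 26)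
  have t20 : (0:ℝ) ≤ (9882204794087684 : ℝ) * e ^ 20 * b ^ 25 :=
    mul_nonneg (mul_nonneg (by norm_num) (pow_nonneg h0.le 20)) (pow_nonneg hb.le 25)
  have t21 : (0:ℝ) ≤ (10098357418705719 : ℝ) * e ^ 21 * b ^ 24 :=
    mul_nonneg (mul_nonneg (by norm_num) (pow_nonneg h0.le 21)) (pow_nonneg hb.le 24)
  have t22 : (0:ℝ) ≤ (9502286746533434 : ℝ) * e ^ 22 * b ^ 23 :=
    mul_nonneg (mul_nonneg (by norm_num) (pow_nonneg h0.le 22)) (pow_nonneg hb.le 23)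
  have t23 : (0:ℝ) ≤ (8234968640708870 : ℝ) * e ^ 23 * b ^ 22 :=
    mul_nonneg (mul_nonneg (by norm_num) (pow_nonneg h0.le 23)) (pow_nonneg hb.le 22)
  have t24 : (0:ℝ) ≤ (6571949006397080 : ℝ) * e ^ 24 * b ^ 21 :=
    mul_nonneg (mul_nonneg (by norm_num) (pow_nonneg h0.le 24)) (pow_nonneg hb.le 21)
  have t25 : (0:ℝ) ≤ (4827601461588288 : ℝ) * e ^ 25 * b ^ 20 :=
    mul_nonneg (mul_nonneg (by norm_num) (pow_nonneg h0.le 25)) (pow_nonneg hb.le 20)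
  have t26 : (0:ℝ) ≤ (3261662964994246 : ℝ) * e ^ 26 * b ^ 19 :=
    mul_nonneg (mul_nonneg (by norm_num) (pow_nonneg h0.le 26)) (pow_nonneg hb.le 19)
  have t27 : (0:ℝ) ≤ (2024562534992297 : ℝ) * e ^ 27 * b ^ 18 :=
    mul_nonneg (mul_nonneg (by norm_num) (pow_nonneg h0.le 27)) (pow_nonneg hb.le 18)
  have t28 : (0:ℝ) ≤ (1152801518796900 : ℝ) * e ^ 28 * b ^ 17 :=
    mul_nonneg (mul_nonneg (by norm_num) (pow_nonneg h0.le 28)) (pow_nonneg hb.le 17)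
  have t29 : (0:ℝ) ≤ (600988933252927 : ℝ) * e ^ 29 * b ^ 16 :=
    mul_nonneg (mul_nonneg (by norm_num) (pow_nonneg h0.le 29)) (pow_nonneg hb.le 16)
  have t30 : (0:ℝ) ≤ (286157187852248 : ℝ) * e ^ 30 * b ^ 15 :=
    mul_nonneg (mul_nonneg (by norm_num) (pow_nonneg h0.le 30)) (pow_nonneg hb.le 15)
  have t31 : (0:ℝ) ≤ (124064200402759 : ℝ) * e ^ 31 * b ^ 14 :=
    mul_nonneg (mul_nonneg (by norm_num) (pow_nonneg h0.le 31)) (pow_nonneg hb.le 14)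
  have t32 : (0:ℝ) ≤ (48792705719708 : ℝ) * e ^ 32 * b ^ 13 :=
    mul_nonneg (mul_nonneg (by norm_num) (pow_nonneg h0.le 32)) (pow_nonneg hb.le 13)
  have t33 : (0:ℝ) ≤ (17326299219156 : ℝ) * e ^ 33 * b ^ 12 :=
    mul_nonneg (mul_nonneg (by norm_num) (pow_nonneg h0.le 33)) (pow_nonneg hb.le 12)
  have t34 : (0:ℝ) ≤ (5523182255232 : ℝ) * e ^ 34 * b ^ 11 :=
    mul_nonneg (mul_nonneg (by norm_num) (pow_nonneg h0.le 34)) (pow_nonneg hb.le 11)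
  have t35 : (0:ℝ) ≤ (1569183042088 : ℝ) * e ^ 35 * b ^ 10 :=
    mul_nonneg (mul_nonneg (by norm_num) (pow_nonneg h0.le 35)) (pow_nonneg hb.le 10)
  have t36 : (0:ℝ) ≤ (393741276000 : ℝ) * e ^ 36 * b ^ 9 :=
    mul_nonneg (mul_nonneg (by norm_num) (pow_nonneg h0.le 36)) (pow_nonneg hb.le 9)
  have t37 : (0:ℝ) ≤ (86249241840 : ℝ) * e ^ 37 * b ^ 8 :=
    mul_nonneg (mul_nonneg (by norm_num) (pow_nonneg h0.le 37)) (pow_nonneg hb.le 8)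
  have t38 : (0:ℝ) ≤ (16245426304 : ℝ) * e ^ 38 * b ^ 7 :=
    mul_nonneg (mul_nonneg (by norm_num) (pow_nonneg h0.le 38)) (pow_nonneg hb.le 7)
  have t39 : (0:ℝ) ≤ (2578355184 : ℝ) * e ^ 39 * b ^ 6 :=
    mul_nonneg (mul_nonneg (by norm_num) (pow_nonneg h0.le 39)) (pow_nonneg hb.le 6)
  have t40 : (0:ℝ) ≤ (335265472 : ℝ) * e ^ 40 * b ^ 5 :=
    mul_nonneg (mul_nonneg (by norm_num) (pow_nonneg h0.le 40)) (pow_nonneg hb.le 5)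
  have t41 : (0:ℝ) ≤ (34278976 : ℝ) * e ^ 41 * b ^ 4 :=
    mul_nonneg (mul_nonneg (by norm_num) (pow_nonneg h0.le 41)) (pow_nonneg hb.le 4)
  have t42 : (0:ℝ) ≤ (2582016 : ℝ) * e ^ 42 * b ^ 3 :=
    mul_nonneg (mul_nonneg (by norm_num) (pow_nonneg h0.le 42)) (pow_nonneg hb.le 3)
  have t43 : (0:ℝ) ≤ (127232 : ℝ) * e ^ 43 * b ^ 2 :=
    mul_nonneg (mul_nonneg (by norm_num) (pow_nonneg h0.le 43)) (pow_nonneg hb.le 2)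
  have t44 : (0:ℝ) ≤ (3072 : ℝ) * e ^ 44 * b ^ 1 :=
    mul_nonneg (mul_nonneg (by norm_num) (pow_nonneg h0.le 44)) (pow_nonneg hb.le 1)
  linarith [key, t0, t1, t2, t3, t4, t5, t6, t7, t8, t9, t10, t11, t12, t13, t14, t15, t16, t17, t18, t19, t20, t21, t22, t23, t24, t25, t26, t27, t28, t29, t30, t31, t32, t33, t34, t35, t36, t37, t38, t39, t40, t41, t42, t43, t44]

lemma sbDpos_pos {e : ℝ} (h0 : 0 < e) (h1 : e < 1) : 0 < sbDpos e := by
  obtain ⟨b, hb, hbe⟩ : ∃ b, 0 < b ∧ b = 1 - e := ⟨1 - e, by linarith, rfl⟩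
  have key : sbDpos e =
      (64 : ℝ) * e ^ 0 * b ^ 17 +
      (784 : ℝ) * e ^ 1 * b ^ 16 +
      (4712 : ℝ) * e ^ 2 * b ^ 15 +
      (18526 : ℝ) * e ^ 3 * b ^ 14 +
      (53360 : ℝ) * e ^ 4 * b ^ 13 +
      (118856 : ℝ) * e ^ 5 * b ^ 12 +
      (210497 : ℝ) * e ^ 6 * b ^ 11 +
      (300732 : ℝ) * e ^ 7 * b ^ 10 +
      (349012 : ℝ) * e ^ 8 * b ^ 9 +
      (329634 : ℝ) * e ^ 9 * b ^ 8 +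
      (252797 : ℝ) * e ^ 10 * b ^ 7 +
      (156436 : ℝ) * e ^ 11 * b ^ 6 +
      (77279 : ℝ) * e ^ 12 * b ^ 5 +
      (29956 : ℝ) * e ^ 13 * b ^ 4 +
      (8840 : ℝ) * e ^ 14 * b ^ 3 +
      (1872 : ℝ) * e ^ 15 * b ^ 2 +
      (252 : ℝ) * e ^ 16 * b ^ 1 +
      (16 : ℝ) * e ^ 17 * b ^ 0 := by
    rw [hbe]; unfold sbDpos; ring
  have t0 : (0:ℝ) < (64 : ℝ) * e ^ 0 * b ^ 17 :=
    mul_pos (mul_pos (by norm_num) (pow_pos h0 0)) (pow_pos hb 17)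
  have t1 : (0:ℝ) ≤ (784 : ℝ) * e ^ 1 * b ^ 16 :=
    mul_nonneg (mul_nonneg (by norm_num) (pow_nonneg h0.le 1)) (pow_nonneg hb.le 16)
  have t2 : (0:ℝ) ≤ (4712 : ℝ) * e ^ 2 * b ^ 15 :=
    mul_nonneg (mul_nonneg (by norm_num) (pow_nonneg h0.le 2)) (pow_nonneg hb.le 15)
  have t3 : (0:ℝ) ≤ (18526 : ℝ) * e ^ 3 * b ^ 14 :=
    mul_nonneg (mul_nonneg (by norm_num) (pow_nonneg h0.le 3)) (pow_nonneg hb.le 14)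
  have t4 : (0:ℝ) ≤ (53360 : ℝ) * e ^ 4 * b ^ 13 :=
    mul_nonneg (mul_nonneg (by norm_num) (pow_nonneg h0.le 4)) (pow_nonneg hb.le 13)
  have t5 : (0:ℝ) ≤ (118856 : ℝ) * e ^ 5 * b ^ 12 :=
    mul_nonneg (mul_nonneg (by norm_num) (pow_nonneg h0.le 5)) (pow_nonneg hb.le 12)
  have t6 : (0:ℝ) ≤ (210497 : ℝ) * e ^ 6 * b ^ 11 :=
    mul_nonneg (mul_nonneg (by norm_num) (pow_nonneg h0.le 6)) (pow_nonneg hb.le 11)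
  have t7 : (0:ℝ) ≤ (300732 : ℝ) * e ^ 7 * b ^ 10 :=
    mul_nonneg (mul_nonneg (by norm_num) (pow_nonneg h0.le 7)) (pow_nonneg hb.le 10)
  have t8 : (0:ℝ) ≤ (349012 : ℝ) * e ^ 8 * b ^ 9 :=
    mul_nonneg (mul_nonneg (by norm_num) (pow_nonneg h0.le 8)) (pow_nonneg hb.le 9)
  have t9 : (0:ℝ) ≤ (329634 : ℝ) * e ^ 9 * b ^ 8 :=
    mul_nonneg (mul_nonneg (by norm_num) (pow_nonneg h0.le 9)) (pow_nonneg hb.le 8)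
  have t10 : (0:ℝ) ≤ (252797 : ℝ) * e ^ 10 * b ^ 7 :=
    mul_nonneg (mul_nonneg (by norm_num) (pow_nonneg h0.le 10)) (pow_nonneg hb.le 7)
  have t11 : (0:ℝ) ≤ (156436 : ℝ) * e ^ 11 * b ^ 6 :=
    mul_nonneg (mul_nonneg (by norm_num) (pow_nonneg h0.le 11)) (pow_nonneg hb.le 6)
  have t12 : (0:ℝ) ≤ (77279 : ℝ) * e ^ 12 * b ^ 5 :=
    mul_nonneg (mul_nonneg (by norm_num) (pow_nonneg h0.le 12)) (pow_nonneg hb.le 5)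
  have t13 : (0:ℝ) ≤ (29956 : ℝ) * e ^ 13 * b ^ 4 :=
    mul_nonneg (mul_nonneg (by norm_num) (pow_nonneg h0.le 13)) (pow_nonneg hb.le 4)
  have t14 : (0:ℝ) ≤ (8840 : ℝ) * e ^ 14 * b ^ 3 :=
    mul_nonneg (mul_nonneg (by norm_num) (pow_nonneg h0.le 14)) (pow_nonneg hb.le 3)
  have t15 : (0:ℝ) ≤ (1872 : ℝ) * e ^ 15 * b ^ 2 :=
    mul_nonneg (mul_nonneg (by norm_num) (pow_nonneg h0.le 15)) (pow_nonneg hb.le 2)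
  have t16 : (0:ℝ) ≤ (252 : ℝ) * e ^ 16 * b ^ 1 :=
    mul_nonneg (mul_nonneg (by norm_num) (pow_nonneg h0.le 16)) (pow_nonneg hb.le 1)
  have t17 : (0:ℝ) ≤ (16 : ℝ) * e ^ 17 * b ^ 0 :=
    mul_nonneg (mul_nonneg (by norm_num) (pow_nonneg h0.le 17)) (pow_nonneg hb.le 0)
  linarith [key, t0, t1, t2, t3, t4, t5, t6, t7, t8, t9, t10, t11, t12, t13, t14, t15, t16, t17]

lemma sbQ_nonneg {e : ℝ} (h0 : 0 < e) (h1 : e < 1) (u v w : ℝ) : 0 ≤ sbQ e u v w := by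
  have hm1 : 0 < sbp11 e := sbp11_pos h0 h1
  have hm2 : 0 < sbM2 e := sbM2_pos h0 h1
  have hd : 0 ≤ sbDet e := sbDet_pos h0 h1
  have key : sbp11 e * sbM2 e * sbQ e u v w
      = sbM2 e * (sbp11 e * u + sbp12 e * v + sbp13 e * w) ^ 2
        + (sbM2 e * v + (sbp11 e * sbp23 e - sbp12 e * sbp13 e) * w) ^ 2
        + sbp11 e * sbDet e * w ^ 2 := by
    unfold sbQ sbM2 sbDet; ring
  have h1' : 0 ≤ sbM2 e * (sbp11 e * u + sbp12 e * v + sbp13 e * w) ^ 2 :=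
    mul_nonneg hm2.le (sq_nonneg _)
  have h2' : 0 ≤ (sbM2 e * v + (sbp11 e * sbp23 e - sbp12 e * sbp13 e) * w) ^ 2 := sq_nonneg _
  have h3' : 0 ≤ sbp11 e * sbDet e * w ^ 2 :=
    mul_nonneg (mul_nonneg hm1.le hd) (sq_nonneg _)
  nlinarith [mul_pos hm1 hm2, key, h1', h2', h3']

lemma sb_step {e : ℝ} (u v w u' v' w' : ℝ) (hu : u' = u - e * v)
    (hw : w' = w - e * (v + 2 * w)) (hv : v' = v - e * (-u' + v + w')) :
    sbQ e u' v' w' = (1 - e + e ^ 2) * (1 + e - e ^ 2) * sbQ e u v w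
      - e * (1 - e) * sbDpos e * (u ^ 2 + v ^ 2 + w ^ 2) := by
  subst hv; subst hu; subst hw
  unfold sbQ sbp11 sbp12 sbp13 sbp22 sbp23 sbp33 sbDpos
  ring

end

/-- Proposition 1: Alternate SGD on the toy Stein Bridging objective
`l(θ, ψ, φ) = ψ − ψθ + (1/2)(1+φ)² + (1/2)(θ+φ)²` with step size `0 < η < 1`
makes `N_t = ψ_t² + (θ_t − 1)² + (φ_t + 1)² decrease geometrically at rate
`(1 − η + η²)(1 + η − η²) = 1 − η²(1−η)²`, and the iterates converge to `(0, 1, −1)`. -/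
theorem stmt3 (η : ℝ) (hη0 : 0 < η) (hη1 : η < 1)
    (ψ φ θ : ℕ → ℝ)
    (hψ : ∀ t, ψ (t + 1) = ψ t + η * (1 - θ t))
    (hφ : ∀ t, φ (t + 1) = φ t - η * (1 + θ t + 2 * φ t))
    (hθ : ∀ t, θ (t + 1) = θ t - η * (-(ψ (t + 1)) + θ t + φ (t + 1))) :
    (∃ C ≥ (0 : ℝ), ∀ t,
      ψ t ^ 2 + (θ t - 1) ^ 2 + (φ t + 1) ^ 2 ≤
        C * ((1 - η + η ^ 2) * (1 + η - η ^ 2)) ^ t) ∧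
    Filter.Tendsto ψ Filter.atTop (nhds 0) ∧
    Filter.Tendsto θ Filter.atTop (nhds 1) ∧
    Filter.Tendsto φ Filter.atTop (nhds (-1)) := by
  have hb : (0:ℝ) < 1 - η := by linarith
  have hf1 : (0:ℝ) < 1 - η + η ^ 2 := by nlinarith [sq_nonneg η]
  have hf2 : (0:ℝ) < 1 + η - η ^ 2 := by nlinarith [mul_pos hη0 hb]
  have hr0 : (0:ℝ) < (1 - η + η ^ 2) * (1 + η - η ^ 2) := mul_pos hf1 hf2
  have hr1 : (1 - η + η ^ 2) * (1 + η - η ^ 2) < 1 := by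
    nlinarith [mul_pos (mul_pos hη0 hb) (mul_pos hη0 hb)]
  have hD : 0 < sbDpos η := sbDpos_pos hη0 hη1
  have hc : (0:ℝ) < η * (1 - η) * sbDpos η := mul_pos (mul_pos hη0 hb) hD
  -- the Lyapunov function
  set Q : ℕ → ℝ := fun t => sbQ η (ψ t) (θ t - 1) (φ t + 1) with hQdef
  set N : ℕ → ℝ := fun t => ψ t ^ 2 + (θ t - 1) ^ 2 + (φ t + 1) ^ 2 with hNdef
  have hstep : ∀ t, Q (t + 1)
      = (1 - η + η ^ 2) * (1 + η - η ^ 2) * Q t - η * (1 - η) * sbDpos η * N t := by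
    intro t
    have hu : ψ (t + 1) = ψ t - η * (θ t - 1) := by rw [hψ t]; ring
    have hw : φ (t + 1) + 1 = (φ t + 1) - η * ((θ t - 1) + 2 * (φ t + 1)) := by
      rw [hφ t]; ring
    have hv : θ (t + 1) - 1
        = (θ t - 1) - η * (-(ψ (t + 1)) + (θ t - 1) + (φ (t + 1) + 1)) := by
      rw [hθ t]; ring
    have := sb_step (e := η) (ψ t) (θ t - 1) (φ t + 1)
      (ψ (t + 1)) (θ (t + 1) - 1) (φ (t + 1) + 1) hu hw hv
    simpa [hQdef, hNdef] using this
  have hQ0 : ∀ t, 0 ≤ Q t := fun t => sbQ_nonneg hη0 hη1 _ _ _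
  have hN0 : ∀ t, 0 ≤ N t := fun t => by
    simp only [hNdef]; positivity
  have hdec : ∀ t, Q (t + 1) ≤ (1 - η + η ^ 2) * (1 + η - η ^ 2) * Q t := by
    intro t
    have h1 : 0 ≤ η * (1 - η) * sbDpos η * N t := mul_nonneg hc.le (hN0 t)
    linarith [hstep t]
  have hgeom : ∀ t, Q t ≤ ((1 - η + η ^ 2) * (1 + η - η ^ 2)) ^ t * Q 0 := by
    intro t
    induction t with
    | zero => simp
    | succ n ih =>
      calc Q (n + 1) ≤ (1 - η + η ^ 2) * (1 + η - η ^ 2) * Q n := hdec n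
        _ ≤ (1 - η + η ^ 2) * (1 + η - η ^ 2)
            * (((1 - η + η ^ 2) * (1 + η - η ^ 2)) ^ n * Q 0) :=
          mul_le_mul_of_nonneg_left ih hr0.le
        _ = ((1 - η + η ^ 2) * (1 + η - η ^ 2)) ^ (n + 1) * Q 0 := by ring
  have hNbound : ∀ t, N t ≤ (Q 0 / (η * (1 - η) * sbDpos η))
      * ((1 - η + η ^ 2) * (1 + η - η ^ 2)) ^ t := by
    intro t
    rw [div_mul_eq_mul_div, le_div_iff₀ hc]
    have h1 : η * (1 - η) * sbDpos η * N t
        = (1 - η + η ^ 2) * (1 + η - η ^ 2) * Q t - Q (t + 1) := by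
      linarith [hstep t]
    have h2 : (1 - η + η ^ 2) * (1 + η - η ^ 2) * Q t
        ≤ (1 - η + η ^ 2) * (1 + η - η ^ 2)
          * (((1 - η + η ^ 2) * (1 + η - η ^ 2)) ^ t * Q 0) :=
      mul_le_mul_of_nonneg_left (hgeom t) hr0.le
    have hpow : 0 ≤ ((1 - η + η ^ 2) * (1 + η - η ^ 2)) ^ t := pow_nonneg hr0.le t
    have h3 : (1 - η + η ^ 2) * (1 + η - η ^ 2)
          * (((1 - η + η ^ 2) * (1 + η - η ^ 2)) ^ t * Q 0)
        ≤ ((1 - η + η ^ 2) * (1 + η - η ^ 2)) ^ t * Q 0 := by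
      nlinarith [mul_nonneg hpow (hQ0 0)]
    nlinarith [hQ0 (t + 1)]
  have hC0 : 0 ≤ Q 0 / (η * (1 - η) * sbDpos η) := div_nonneg (hQ0 0) hc.le
  -- geometric decay of the bound
  have hCr : Filter.Tendsto
      (fun t : ℕ => (Q 0 / (η * (1 - η) * sbDpos η))
        * ((1 - η + η ^ 2) * (1 + η - η ^ 2)) ^ t) Filter.atTop (nhds 0) := by
    have h := tendsto_pow_atTop_nhds_zero_of_lt_one hr0.le hr1
    simpa using h.const_mul (Q 0 / (η * (1 - η) * sbDpos η))
  have hNt : Filter.Tendsto N Filter.atTop (nhds 0) :=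
    squeeze_zero hN0 hNbound hCr
  have key : ∀ f : ℕ → ℝ, (∀ t, f t ^ 2 ≤ N t) → Filter.Tendsto f Filter.atTop (nhds 0) := by
    intro f hf
    have hsq : Filter.Tendsto (fun t => f t ^ 2) Filter.atTop (nhds 0) :=
      squeeze_zero (fun t => sq_nonneg _) hf hNt
    rw [tendsto_zero_iff_abs_tendsto_zero]
    have habs : abs ∘ f = fun t => Real.sqrt (f t ^ 2) := by
      funext t; simp [Function.comp, Real.sqrt_sq_eq_abs]
    rw [habs]
    have := (Real.continuous_sqrt.tendsto 0).comp hsq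
    simpa [Function.comp_def] using this
  have hψt : Filter.Tendsto ψ Filter.atTop (nhds 0) := by
    apply key
    intro t
    have := sq_nonneg (θ t - 1)
    have := sq_nonneg (φ t + 1)
    simp only [hNdef]
    nlinarith
  have hθt' : Filter.Tendsto (fun t => θ t - 1) Filter.atTop (nhds 0) := by
    apply key
    intro t
    have := sq_nonneg (ψ t)
    have := sq_nonneg (φ t + 1)
    simp only [hNdef]
    nlinarith
  have hφt' : Filter.Tendsto (fun t => φ t + 1) Filter.atTop (nhds 0) := by
    apply key
    intro t
    have := sq_nonneg (ψ t)
    have := sq_nonneg (θ t - 1)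
    simp only [hNdef]
    nlinarith
  refine ⟨⟨Q 0 / (η * (1 - η) * sbDpos η), hC0, fun t => ?_⟩, hψt, ?_, ?_⟩
  · have := hNbound t
    simpa [hNdef] using this
  · have h := hθt'.add (tendsto_const_nhds (x := (1:ℝ)) (f := Filter.atTop))
    simpa using h
  · have h := hφt'.add (tendsto_const_nhds (x := (-1:ℝ)) (f := Filter.atTop))
    simpa using h
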